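/- Suppose F : ℕ^k → ℕ satisfies F(0) = 0, is weakly increasing, F = L + P with L linear and P eventually periodic, and in the last coordinate F(y, z + L₀) = F(y, z) + S·L₀ for all y and all z ≥ R (period L₀, slope S, margin R), with S > 0. Let n = ⌊R/(W L₀)⌋ · W · L₀ where W = sup_{(y,z)} (F(y,z+1) − F(y,z)) ≥ 1 is assumed finite, and suppose n ≥ max(R, S·L₀) and S·n ∈ ℕ. For 0 ≤ j ≤ Sn − 1 define F_j = ⌊(F + j)/(Sn)⌋. Then F = Σ_{j=0}^{Sn−1} F_j, each F_j is weakly increasing with F_j(0) = 0, each F_j satisfies F_j(y, z+1) − F_j(y, z) ∈ {0,1} for all y, z, and F_j(y, z+n) = F_j(y, z) + 1 for all y and z ≥ n. -/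

import Mathlib

lemma sum_div_shift (N : ℕ) (hN : 0 < N) (x : ℕ) :
    ∑ j ∈ Finset.range N, (x + j) / N = x := by
  induction x with
  | zero =>
    refine Finset.sum_eq_zero fun j hj => ?_
    simp only [Finset.mem_range] at hj
    simp [Nat.div_eq_of_lt hj]
  | succ x ih =>
    have h1 : ∑ j ∈ Finset.range N, (x + 1 + j) / N
        = ∑ j ∈ Finset.range N, (x + (j + 1)) / N := by
      apply Finset.sum_congr rfl
      intro j _; congr 1; omega
    have h2 : ∑ j ∈ Finset.range (N + 1), (x + j) / N
        = (∑ j ∈ Finset.range N, (x + (j + 1)) / N) + (x + 0) / N := by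
      simpa using Finset.sum_range_succ' (fun j => (x + j) / N) N
    have h3 : ∑ j ∈ Finset.range (N + 1), (x + j) / N
        = (∑ j ∈ Finset.range N, (x + j) / N) + (x + N) / N := by
      simpa using Finset.sum_range_succ (fun j => (x + j) / N) N
    have h4 : (x + N) / N = x / N + 1 := Nat.add_div_right _ hN
    have h5 : (x + 0) / N = x / N := by norm_num
    rw [h1]
    omega

/-- Meagerization reduction (Case 1 in the proof of Theorem 1.1): with
`n = ⌊R/(WL₀)⌋·W·L₀` and `N = S·n ∈ ℕ`, setting `F_j = ⌊(F+j)/N⌋`, we get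
`F = ∑_{j<N} F_j`, each `F_j` is increasing, zero at zero, has roughness at most 1
in the last coordinate, and satisfies `F_j(y, z+n) = F_j(y, z) + 1` for `z ≥ n`. -/
theorem meagerization_case_one (m : ℕ) (F : (Fin m → ℕ) → ℕ → ℕ)
    (h00 : F 0 0 = 0)
    (hmono : ∀ y y' z z', y ≤ y' → z ≤ z' → F y z ≤ F y' z')
    -- F = L + P with L linear and P eventually periodic
    (b : Fin m → ℚ) (c : ℚ) (P : (Fin m → ℕ) → ℕ → ℚ)
    (hdec : ∀ y z, (F y z : ℚ) = ∑ i, b i * (y i : ℚ) + c * z + P y z)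
    (lam : Fin m → ℕ) (lamz : ℕ) (r : Fin m → ℕ) (rz : ℕ)
    (hlam : ∀ i, 0 < lam i) (hlamz : 0 < lamz)
    (hPy : ∀ (i : Fin m) y z, r i ≤ y i →
      P (Function.update y i (y i + lam i)) z = P y z)
    (hPz : ∀ y z, rz ≤ z → P y (z + lamz) = P y z)
    -- period L₀, slope S > 0, margin R in the last coordinate
    (L₀ R : ℕ) (hL₀ : 0 < L₀) (S : ℚ) (hS : 0 < S)
    (hper : ∀ y z, R ≤ z → (F y (z + L₀) : ℚ) = (F y z : ℚ) + S * L₀)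
    -- roughness W
    (W : ℕ) (hW1 : 1 ≤ W) (hW : ∀ y z, F y (z + 1) ≤ F y z + W)
    -- n and N = S·n
    (n : ℕ) (hn : n = R / (W * L₀) * W * L₀)
    (hnR : R ≤ n) (hnSL : S * L₀ ≤ (n : ℚ))
    (N : ℕ) (hN : (N : ℚ) = S * n) :
    (∀ y z, F y z = ∑ j ∈ Finset.range N, (F y z + j) / N) ∧
    (∀ j, j < N → (F 0 0 + j) / N = 0) ∧
    (∀ j y y' z z', y ≤ y' → z ≤ z' → (F y z + j) / N ≤ (F y' z' + j) / N) ∧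
    (∀ j y z, (F y (z + 1) + j) / N = (F y z + j) / N ∨
      (F y (z + 1) + j) / N = (F y z + j) / N + 1) ∧
    (∀ j y z, n ≤ z → (F y (z + n) + j) / N = (F y z + j) / N + 1) := by
  -- S * L₀ is a positive integer, hence ≥ 1
  have hSL1 : (1 : ℚ) ≤ S * L₀ := by
    have hmle : F 0 R ≤ F 0 (R + L₀) := hmono 0 0 R (R + L₀) le_rfl (by omega)
    have heq := hper 0 R le_rfl
    have hcast : (↑(F 0 (R + L₀) - F 0 R) : ℚ) = S * L₀ := by
      rw [Nat.cast_sub hmle]; linarith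
    have hpos : 0 < F 0 (R + L₀) - F 0 R := by
      by_contra h
      have : F 0 (R + L₀) - F 0 R = 0 := by omega
      rw [this] at hcast
      simp at hcast
      rcases hcast with h' | h'
      · exact absurd h' hS.ne'
      · omega
    have : (1 : ℚ) ≤ ↑(F 0 (R + L₀) - F 0 R) := by exact_mod_cast hpos
    linarith
  -- n > 0
  have hn0 : 0 < n := by
    have : (0 : ℚ) < n := lt_of_lt_of_le (by linarith) hnSL
    exact_mod_cast this
  -- n ≥ W * L₀
  have hq0 : 0 < R / (W * L₀) := by
    rcases Nat.eq_zero_or_pos (R / (W * L₀)) with h | h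
    · rw [h] at hn; simp at hn; omega
    · exact h
  have hnWL : W * L₀ ≤ n := by
    calc W * L₀ = 1 * (W * L₀) := by ring
    _ ≤ R / (W * L₀) * (W * L₀) := by
        exact Nat.mul_le_mul_right _ hq0
    _ = n := by rw [hn]; ring
  -- W ≤ N
  have hWN : W ≤ N := by
    have h1 : (W : ℚ) * L₀ ≤ (n : ℚ) := by exact_mod_cast hnWL
    have h2 : (W : ℚ) ≤ S * n := by
      have hWpos : (0 : ℚ) < W := by exact_mod_cast hW1
      nlinarith
    rw [← hN] at h2
    exact_mod_cast h2
  have hN0 : 0 < N := lt_of_lt_of_le hW1 hWN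
  -- iterated periodicity
  have hiter : ∀ (y : Fin m → ℕ) (t z : ℕ), R ≤ z →
      (F y (z + t * L₀) : ℚ) = (F y z : ℚ) + S * (t * L₀) := by
    intro y t
    induction t with
    | zero => intro z _; simp
    | succ t ih =>
      intro z hz
      have h1 : z + (t + 1) * L₀ = (z + t * L₀) + L₀ := by ring
      rw [h1, hper y (z + t * L₀) (by omega), ih z hz]
      push_cast
      ring
  -- key: F y (z + n) = F y z + N for z ≥ n
  have hkey : ∀ (y : Fin m → ℕ) (z : ℕ), n ≤ z → F y (z + n) = F y z + N := by
    intro y z hz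
    have hndiv : n = R / (W * L₀) * W * L₀ := hn
    have := hiter y (R / (W * L₀) * W) z (le_trans hnR hz)
    rw [← hndiv] at this
    have hq : (F y (z + n) : ℚ) = ((F y z + N : ℕ) : ℚ) := by
      push_cast
      rw [this, hN]
      push_cast [hndiv]
      ring
    exact_mod_cast hq
  refine ⟨?_, ?_, ?_, ?_, ?_⟩
  · intro y z
    exact (sum_div_shift N hN0 (F y z)).symm
  · intro j hj
    rw [h00]
    simpa using Nat.div_eq_of_lt hj
  · intro j y y' z z' hy hz
    exact Nat.div_le_div_right (by have := hmono y y' z z' hy hz; omega)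
  · intro j y z
    have h1 : F y z ≤ F y (z + 1) := hmono y y z (z + 1) le_rfl (by omega)
    have h2 : F y (z + 1) ≤ F y z + N := le_trans (hW y z) (by omega)
    have h3 : (F y z + j) / N ≤ (F y (z + 1) + j) / N :=
      Nat.div_le_div_right (by omega)
    have h4 : (F y (z + 1) + j) / N ≤ (F y z + j) / N + 1 := by
      have : (F y (z + 1) + j) / N ≤ (F y z + j + N) / N :=
        Nat.div_le_div_right (by omega)
      rwa [Nat.add_div_right _ hN0] at this
    omega
  · intro j y z hz
    rw [hkey y z hz]
    have : F y z + N + j = F y z + j + N := by ring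
    rw [this, Nat.add_div_right _ hN0]
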